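/- (Per-step improvement with the quadratic local subproblem.) Let f be convex and L-smooth and define the local model Õ(α, v, Δα_[P]) := f(Aα) + ∇f(Aα)ᵀAΔα_[P] + (L/2)‖AΔα_[P]‖₂² + Σ_{i∈P} g_i((α + Δα_[P])_i) + Σ_{i∉P} g_i(α_i). If Δα_[P] (supported on P) is a θ-approximate solution of min over vectors s_[P] supported on P of Õ(α⁽ᵗ⁾, Aα⁽ᵗ⁾, s_[P]), i.e. Õ(α⁽ᵗ⁾, Aα⁽ᵗ⁾, Δα_[P]) ≤ θ·min_{s_[P]} Õ(α⁽ᵗ⁾, Aα⁽ᵗ⁾, s_[P]) + (1−θ)·Õ(α⁽ᵗ⁾, Aα⁽ᵗ⁾, 0), then O(α⁽ᵗ⁾) − O(α⁽ᵗ⁾ + Δα_[P]) ≥ θ·[ O(α⁽ᵗ⁾) − min_{s_[P]} Õ(α⁽ᵗ⁾, Aα⁽ᵗ⁾, s_[P]) ]. -/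

import Mathlib

/-!
STATEMENT 8: per-step improvement with the quadratic local subproblem.  If `Δα_[P]`
(supported on `P`) is a `θ`-approximate solution of the quadratic local model
`Õ(α, Aα, ·)`, then `O(α⁽ᵗ⁾) − O(α⁽ᵗ⁾ + Δα_[P]) ≥ θ (O(α⁽ᵗ⁾) − min_{s_[P]} Õ(α⁽ᵗ⁾, Aα⁽ᵗ⁾, s_[P]))`.
-/

open Finset Set
open scoped RealInnerProductSpace BigOperators

noncomputable section

/-- `A α`, viewed as a vector of the Euclidean space `ℝ^d`. -/
def Amul {d n : ℕ} (A : Matrix (Fin d) (Fin n) ℝ) (x : Fin n → ℝ) :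
    EuclideanSpace ℝ (Fin d) := WithLp.toLp 2 (fun j => ∑ i, A j i * x i)

/-- The objective `O(α) := f(Aα) + Σᵢ gᵢ(αᵢ)`. -/
def Obj {d n : ℕ} (A : Matrix (Fin d) (Fin n) ℝ) (f : EuclideanSpace ℝ (Fin d) → ℝ)
    (g : Fin n → ℝ → ℝ) (α : Fin n → ℝ) : ℝ := f (Amul A α) + ∑ i, g i (α i)

/-- The quadratic local model
`Õ(α, Aα, Δ) := f(Aα) + ∇f(Aα)ᵀAΔ + (L/2)‖AΔ‖² + Σ_{i∈P} gᵢ((α+Δ)ᵢ) + Σ_{i∉P} gᵢ(αᵢ)`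
(`f'` is the gradient of `f`). -/
def Otil {d n : ℕ} (A : Matrix (Fin d) (Fin n) ℝ) (f : EuclideanSpace ℝ (Fin d) → ℝ)
    (f' : EuclideanSpace ℝ (Fin d) → EuclideanSpace ℝ (Fin d)) (g : Fin n → ℝ → ℝ)
    (L : ℝ) (P : Finset (Fin n)) (α Δ : Fin n → ℝ) : ℝ :=
  f (Amul A α) + ⟪f' (Amul A α), Amul A Δ⟫ + L / 2 * ‖Amul A Δ‖ ^ 2 +
    ∑ i ∈ P, g i (α i + Δ i) + ∑ i ∈ Pᶜ, g i (α i)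


theorem descent_lemma {E : Type*} [NormedAddCommGroup E] [InnerProductSpace ℝ E] [CompleteSpace E]
    (f : E → ℝ) (f' : E → E) (L : ℝ) (hL : 0 < L)
    (hfgrad : ∀ x, HasGradientAt f (f' x) x)
    (hflip : LipschitzWith L.toNNReal f') (x y : E) :
    f (x + y) ≤ f x + ⟪f' x, y⟫ + L / 2 * ‖y‖ ^ 2 := by
  set φ : ℝ → ℝ := fun t => f (x + t • y) - t * ⟪f' x, y⟫ - L / 2 * t ^ 2 * ‖y‖ ^ 2 with hφ
  have hd : ∀ t : ℝ, HasDerivAt φ (⟪f' (x + t • y), y⟫ - ⟪f' x, y⟫ - L * t * ‖y‖ ^ 2) t := by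
    intro t
    have h1 : HasDerivAt (fun t : ℝ => x + t • y) y t := by
      simpa using ((hasDerivAt_id t).smul_const y).const_add x
    have h2 := ((hfgrad (x + t • y)).hasFDerivAt.comp_hasDerivAt t h1)
    have h2' : HasDerivAt (fun t : ℝ => f (x + t • y)) ⟪f' (x + t • y), y⟫ t := by
      simp at h2; exact h2
    have h3 : HasDerivAt (fun t : ℝ => t * ⟪f' x, y⟫) ⟪f' x, y⟫ t := by
      simpa using (hasDerivAt_id t).mul_const ⟪f' x, y⟫
    have h4 : HasDerivAt (fun t : ℝ => L / 2 * t ^ 2 * ‖y‖ ^ 2) (L * t * ‖y‖ ^ 2) t := by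
      have := ((hasDerivAt_pow 2 t).const_mul (L / 2)).mul_const (‖y‖ ^ 2)
      refine this.congr_deriv ?_
      rw [show (2:ℕ) - 1 = 1 from rfl]; push_cast; ring
    exact (h2'.sub h3).sub h4
  have hanti : AntitoneOn φ (Set.Icc 0 1) := by
    apply antitoneOn_of_deriv_nonpos (convex_Icc 0 1)
    · have : Differentiable ℝ φ := fun t => (hd t).differentiableAt
      exact this.continuous.continuousOn
    · intro t ht
      exact ((hd t).differentiableAt).differentiableWithinAt
    · intro t ht
      rw [interior_Icc] at ht
      rw [(hd t).deriv]
      have hle : ⟪f' (x + t • y) - f' x, y⟫ ≤ L * t * ‖y‖ ^ 2 := by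
        calc ⟪f' (x + t • y) - f' x, y⟫ ≤ ‖f' (x + t • y) - f' x‖ * ‖y‖ :=
              real_inner_le_norm _ _
          _ ≤ (L * ‖t • y‖) * ‖y‖ := by
              apply mul_le_mul_of_nonneg_right _ (norm_nonneg y)
              have := hflip.norm_sub_le (x + t • y) x
              simpa [Real.coe_toNNReal L hL.le] using this
          _ ≤ L * t * ‖y‖ ^ 2 := by
              rw [norm_smul, Real.norm_eq_abs, abs_of_pos ht.1]
              ring_nf; rfl
      have := inner_sub_left (𝕜 := ℝ) (f' (x + t • y)) (f' x) y
      linarith [hle, this.symm.le, this.le]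
  have h01 := hanti (Set.mem_Icc.mpr ⟨le_refl 0, zero_le_one⟩)
      (Set.mem_Icc.mpr ⟨zero_le_one, le_refl 1⟩) zero_le_one
  simp only [hφ] at h01
  norm_num at h01
  linarith

theorem Amul_add {d n : ℕ} (A : Matrix (Fin d) (Fin n) ℝ) (x y : Fin n → ℝ) :
    Amul A (x + y) = Amul A x + Amul A y := by
  ext j
  simp [Amul, mul_add, Finset.sum_add_distrib]

theorem Amul_zero {d n : ℕ} (A : Matrix (Fin d) (Fin n) ℝ) :
    Amul A (0 : Fin n → ℝ) = 0 := by
  ext j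
  simp [Amul]

theorem stmt_8
    {d n : ℕ}
    (A : Matrix (Fin d) (Fin n) ℝ)
    (f : EuclideanSpace ℝ (Fin d) → ℝ)
    (f' : EuclideanSpace ℝ (Fin d) → EuclideanSpace ℝ (Fin d))
    (L θ : ℝ) (hL : 0 < L) (hθ : θ ∈ Set.Ioc (0 : ℝ) 1)
    -- `f` is convex and `L`-smooth (differentiable with `L`-Lipschitz gradient `f'`)
    (hfconv : ConvexOn ℝ Set.univ f)
    (hfgrad : ∀ x, HasGradientAt f (f' x) x)
    (hflip : LipschitzWith L.toNNReal f')
    -- each `gᵢ` is convex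
    (g : Fin n → ℝ → ℝ) (hg : ∀ i, ConvexOn ℝ Set.univ (g i))
    (P : Finset (Fin n)) (α : Fin n → ℝ)
    -- `Δα_[P]` is supported on `P` and is a `θ`-approximate solution of the local model
    (Δ : Fin n → ℝ) (hΔsupp : ∀ i, i ∉ P → Δ i = 0)
    (happrox :
      Otil A f f' g L P α Δ ≤
        θ * (⨅ s : {s : Fin n → ℝ // ∀ i, i ∉ P → s i = 0},
              Otil A f f' g L P α (s : Fin n → ℝ))
          + (1 - θ) * Otil A f f' g L P α 0) :
    Obj A f g α - Obj A f g (α + Δ) ≥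
      θ * (Obj A f g α -
        ⨅ s : {s : Fin n → ℝ // ∀ i, i ∉ P → s i = 0},
          Otil A f f' g L P α (s : Fin n → ℝ)) := by
  obtain ⟨hθ0, hθ1⟩ := hθ
  set M := (⨅ s : {s : Fin n → ℝ // ∀ i, i ∉ P → s i = 0},
      Otil A f f' g L P α (s : Fin n → ℝ)) with hM
  have h0 : Otil A f f' g L P α 0 = Obj A f g α := by
    rw [Otil, Obj, Amul_zero]
    simp only [inner_zero_right, norm_zero, Pi.zero_apply, add_zero]
    have hs := Finset.sum_add_sum_compl P (fun i => g i (α i))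
    norm_num
    linarith [hs]
  have hsum : ∑ i, g i ((α + Δ) i) =
      ∑ i ∈ P, g i (α i + Δ i) + ∑ i ∈ Pᶜ, g i (α i) := by
    rw [← Finset.sum_add_sum_compl P (fun i => g i ((α + Δ) i))]
    congr 1
    refine Finset.sum_congr rfl (fun i hi => ?_)
    rw [Finset.mem_compl] at hi
    simp [Pi.add_apply, hΔsupp i hi]
  have hle : Obj A f g (α + Δ) ≤ Otil A f f' g L P α Δ := by
    rw [Obj, Otil, Amul_add, hsum]
    have := descent_lemma f f' L hL hfgrad hflip (Amul A α) (Amul A Δ)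
    linarith
  rw [h0] at happrox
  have : Obj A f g (α + Δ) ≤ θ * M + (1 - θ) * Obj A f g α := le_trans hle happrox
  nlinarith


end
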